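/- Let (N,v) be a convex game, ε* its least core value, x a point in the least core (so x(N)=v(N), x(R) ≥ v(R)+ε* for all nonempty R ⊊ N), and S an essential coalition (nonempty S ⊊ N with x(S)=v(S)+ε*). Then for all T ⊆ S: max over Q ⊆ N\S of (v(T∪Q) − x(Q)) = max{v(T), v(T∪(N\S)) − x(N\S)}. -/

import Mathlib

open Finset

theorem reduced_game_max_formula {α : Type*} [Fintype α] [DecidableEq α]
    (v : Finset α → ℝ) (h0 : v ∅ = 0)
    (hsuper : ∀ S T : Finset α, v S + v T ≤ v (S ∩ T) + v (S ∪ T))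
    (ε : ℝ) (x : α → ℝ)
    (hN : ∑ i, x i = v Finset.univ)
    (hfeas : ∀ R : Finset α, R.Nonempty → R ≠ Finset.univ → v R + ε ≤ ∑ i ∈ R, x i)
    (S : Finset α) (hSne : S.Nonempty) (hSproper : S ≠ Finset.univ)
    (hess : ∑ i ∈ S, x i = v S + ε) :
    ∀ T : Finset α, T ⊆ S →
      (Sᶜ.powerset.sup' (Finset.powerset_nonempty _)
          (fun Q => v (T ∪ Q) - ∑ i ∈ Q, x i))
        = max (v T) (v (T ∪ Sᶜ) - ∑ i ∈ Sᶜ, x i) := by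
  intro T hT
  apply le_antisymm
  · apply Finset.sup'_le
    intro Q hQ
    rw [Finset.mem_powerset] at hQ
    by_cases hQS : Q = Sᶜ
    · subst hQS; exact le_max_right _ _
    · refine le_trans ?_ (le_max_left _ _)
      have hQnotS : ∀ a ∈ Q, a ∉ S := fun a ha => Finset.mem_compl.mp (hQ ha)
      have hinter : (T ∪ Q) ∩ S = T := by
        ext a
        simp only [Finset.mem_inter, Finset.mem_union]
        constructor
        · rintro ⟨h1 | h1, h2⟩
          · exact h1
          · exact absurd h2 (hQnotS a h1)
        · intro h; exact ⟨Or.inl h, hT h⟩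
      have hunion : (T ∪ Q) ∪ S = S ∪ Q := by
        ext a
        simp only [Finset.mem_union]
        constructor
        · rintro ((h | h) | h) <;> [exact Or.inl (hT h); exact Or.inr h; exact Or.inl h]
        · rintro (h | h) <;> [exact Or.inr h; exact Or.inl (Or.inr h)]
      have hsup := hsuper (T ∪ Q) S
      rw [hinter, hunion] at hsup
      have hdisj : Disjoint S Q := Finset.disjoint_left.mpr (fun a ha hb => hQnotS a hb ha)
      have hSQne : (S ∪ Q).Nonempty := hSne.mono Finset.subset_union_left
      have hSQproper : S ∪ Q ≠ Finset.univ := by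
        intro h
        apply hQS
        apply Finset.Subset.antisymm hQ
        intro a ha
        have : a ∈ S ∪ Q := h ▸ Finset.mem_univ a
        rcases Finset.mem_union.mp this with h' | h'
        · exact absurd h' (Finset.mem_compl.mp ha)
        · exact h'
      have hf := hfeas (S ∪ Q) hSQne hSQproper
      rw [Finset.sum_union hdisj] at hf
      linarith
  · apply max_le
    · have h := Finset.le_sup' (fun Q => v (T ∪ Q) - ∑ i ∈ Q, x i)
        (Finset.mem_powerset.mpr (Finset.empty_subset Sᶜ))
      simpa only [Finset.union_empty, Finset.sum_empty, sub_zero] using h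
    · exact Finset.le_sup' (fun Q => v (T ∪ Q) - ∑ i ∈ Q, x i)
        (Finset.mem_powerset.mpr (Finset.Subset.refl Sᶜ))
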